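/- Monotone step between semantics over growing worlds: for every world w, all worlds w' ≥ w, every principal expression p, and all keys k₁, k₂: if w,k₂ ⊨_c p ▷ k₁ then w',k₂ ⊨_c p ▷ k₁ (the implication from condition (2) to condition (3) of Theorem 4.1). -/
import Mathlib


/-- Principal expressions over keys `K`, global names `G`, local names `N`. -/
inductive PExp (K G N : Type*) where
  | key : K → PExp K G N
  | glob : G → PExp K G N
  | loc : N → PExp K G N
  | s : PExp K G N → PExp K G N → PExp K G N

/-- Formulas of LLNC. -/
inductive Fml (K G N : Type*) where
  | bdto : PExp K G N → PExp K G N → Fml K G N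
  | cert : K → Fml K G N → Fml K G N
  | not : Fml K G N → Fml K G N
  | and : Fml K G N → Fml K G N → Fml K G N

/-- A world: an interpretation of global names and an assignment of
certificates to keys, with only finitely many certificates issued. -/
structure World (K G N : Type*) where
  beta : G → Set K
  certs : K → Set (Fml K G N)
  finite_certs : (⋃ k, certs k).Finite

variable {K G N : Type*}

/-- The interpretation of a principal expression relative to a world, a
local name assignment, and a key. -/
def interp (w : World K G N) (l : K → N → Set K) : PExp K G N → K → Set K
  | .key k', _ => {k'}
  | .glob g, _ => w.beta g
  | .loc n, k => l k n
  | .s p q, k => ⋃ k' ∈ interp w l p k, interp w l q k'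

/-- Satisfaction of a formula at a world, local name assignment, and key. -/
def Sat (w : World K G N) (l : K → N → Set K) (k : K) : Fml K G N → Prop
  | .bdto p q => interp w l q k ⊆ interp w l p k
  | .cert k' φ => φ ∈ w.certs k'
  | .not φ => ¬ Sat w l k φ
  | .and φ ψ => Sat w l k φ ∧ Sat w l k ψ

/-- A local name assignment is consistent with a world if every issued
binding certificate holds at the issuer. -/
def Consistent (w : World K G N) (l : K → N → Set K) : Prop :=
  ∀ (k : K) (n : N) (p : PExp K G N),
    Fml.bdto (.loc n) p ∈ w.certs k → Sat w l k (.bdto (.loc n) p)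

/-- `lw` is the (unique) minimal local name assignment consistent with `w`. -/
def IsMinConsistent (w : World K G N) (lw : K → N → Set K) : Prop :=
  Consistent w lw ∧ ∀ l, Consistent w l → ∀ (k : K) (n : N), lw k n ⊆ l k n

/-- Open-semantics satisfaction: satisfaction with a consistent assignment. -/
def OSat (w : World K G N) (l : K → N → Set K) (k : K) (φ : Fml K G N) : Prop :=
  Sat w l k φ ∧ Consistent w l

/-- `φ` is o-satisfiable. -/
def OSatisfiable (φ : Fml K G N) : Prop :=
  ∃ (w : World K G N) (l : K → N → Set K) (k : K), OSat w l k φ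

/-- `φ` is o-valid: no triple satisfies `¬φ` under the open semantics. -/
def OValid (φ : Fml K G N) : Prop :=
  ¬ ∃ (w : World K G N) (l : K → N → Set K) (k : K), OSat w l k (.not φ)

/-- `φ` is c-satisfiable: some world and key satisfy it under the minimal
consistent local name assignment of the world. -/
def CSatisfiable (φ : Fml K G N) : Prop :=
  ∃ (w : World K G N) (k : K) (lw : K → N → Set K), IsMinConsistent w lw ∧ Sat w lw k φ

/-- `φ` is c-valid: every world and key satisfy it under the minimal
consistent local name assignment of the world. -/
def CValid (φ : Fml K G N) : Prop :=
  ∀ (w : World K G N) (k : K) (lw : K → N → Set K), IsMinConsistent w lw → Sat w lw k φ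

/-- The ordering on worlds: `WorldLE w w'` (i.e. `w' ≥ w`) iff `w'` has more
bindings of global names and more certificates. -/
def WorldLE (w w' : World K G N) : Prop :=
  (∀ g : G, w.beta g ⊆ w'.beta g) ∧ (∀ k : K, w.certs k ⊆ w'.certs k)

theorem interp_mono (w w' : World K G N) (hb : ∀ g : G, w.beta g ⊆ w'.beta g)
    (l l' : K → N → Set K) (hl : ∀ k n, l k n ⊆ l' k n) (p : PExp K G N) :
    ∀ k, interp w l p k ⊆ interp w' l' p k := by
  induction p with
  | key k' => intro k; exact subset_rfl
  | glob g => intro k; exact hb g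
  | loc n => intro k; exact hl k n
  | s p q ihp ihq =>
    intro k x hx
    simp only [interp, Set.mem_iUnion] at hx ⊢
    obtain ⟨k', hk', hx⟩ := hx
    exact ⟨k', ihp k hk', ihq k' hx⟩

/-- growing the world preserves closed-semantics facts
`p ▷ k₁` (the implication (2) ⇒ (3) of Theorem 4.1). -/
theorem csat_monotone_world [Nonempty K] (w w' : World K G N)
    (hle : WorldLE w w') (p : PExp K G N) (k₁ k₂ : K)
    (lw : K → N → Set K) (hlw : IsMinConsistent w lw)
    (lw' : K → N → Set K) (hlw' : IsMinConsistent w' lw')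
    (h : Sat w lw k₂ (.bdto p (.key k₁))) :
    Sat w' lw' k₂ (.bdto p (.key k₁)) := by
  have hcons : Consistent w lw' := by
    intro k n q hq
    have := hlw'.1 k n q (hle.2 k hq)
    exact fun x hx => this (interp_mono w w' hle.1 lw' lw' (fun _ _ => subset_rfl) q k hx)
  have hle' : ∀ k n, lw k n ⊆ lw' k n := hlw.2 lw' hcons
  simp only [Sat, interp, Set.singleton_subset_iff] at h ⊢
  exact interp_mono w w' hle.1 lw lw' hle' p k₂ h
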